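/- Let k be a field of characteristic p > 0, G a finite group, M a kG-module, and R a normal p-subgroup of G acting trivially on M. Let Q ≤ G. Then Σ_{K < Q} tr_K^Q(M^K) = Σ_{H < QR} tr_H^{QR}(M^H), where both sums run over all proper subgroups, as subspaces of M^Q = M^{QR}. -/

import Mathlib

variable {k V G : Type*} [Field k] [AddCommGroup V] [Module k V] [Group G]

/-- The subspace of `H`-fixed points `M^H` of a representation `M`. -/
def fixedSub (ρ : Representation k G V) (H : Subgroup G) : Submodule k V where
  carrier := {v | ∀ h ∈ H, ρ h v = v}
  add_mem' := by intro a b ha hb h hh; simp [map_add, ha h hh, hb h hh]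
  zero_mem' := by intro h hh; simp
  smul_mem' := by intro c v hv h hh; rw [LinearMap.map_smul, hv h hh]

/-- The relative trace map `tr_K^H : m ↦ Σ_{g ∈ [H/K]} g·m`, defined via a choice of
left coset representatives of `K` in `H` (on `K`-fixed points it is independent of
this choice). -/
noncomputable def relTrace [Finite G] (ρ : Representation k G V) (K H : Subgroup G) :
    V →ₗ[k] V :=
  letI : Fintype (H ⧸ K.subgroupOf H) := Fintype.ofFinite _
  ∑ x : H ⧸ K.subgroupOf H, ρ (x.out : G)

/-- The sum `Σ_{T < S} tr_T^S(M^T)` of the images of the relative traces from all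
proper subgroups of `S`. -/
noncomputable def traceSum [Finite G] (ρ : Representation k G V) (S : Subgroup G) :
    Submodule k V :=
  ⨆ T : {T : Subgroup G // T < S}, Submodule.map (relTrace ρ T.1 S) (fixedSub ρ T.1)

/-- The Brauer quotient (Brauer construction) `M(S) = M^S / Σ_{T<S} tr_T^S(M^T)`
as a `k`-vector space. -/
noncomputable abbrev BrauerQuotient [Finite G] (ρ : Representation k G V) (S : Subgroup G) :=
  (fixedSub ρ S) ⧸ ((traceSum ρ S).comap (fixedSub ρ S).subtype)


open Pointwise

section aux

variable (ρ : Representation k G V)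

lemma fixedSub_mono {K L : Subgroup G} (h : K ≤ L) : fixedSub ρ L ≤ fixedSub ρ K :=
  fun _ hv g hg => hv g (h hg)

lemma mem_fixedSub_sup {A B : Subgroup G} {v : V} (ha : v ∈ fixedSub ρ A)
    (hb : v ∈ fixedSub ρ B) : v ∈ fixedSub ρ (A ⊔ B) := by
  intro g hg
  rw [Subgroup.sup_eq_closure] at hg
  induction hg using Subgroup.closure_induction with
  | mem x hx => rcases hx with hx | hx
                · exact ha x hx
                · exact hb x hx
  | one => simp
  | mul x y hx hy px py => rw [map_mul, Module.End.mul_apply, py, px]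
  | inv x hx px => rw [← px]; rw [← Module.End.mul_apply, ← map_mul, inv_mul_cancel, map_one,
      Module.End.one_apply, px]

variable [Finite G]

/-- On `K`-fixed vectors, applying a chosen representative of a coset is the same as
applying any element of that coset. -/
lemma rep_out_eq (K H : Subgroup G) {m : V} (hm : m ∈ fixedSub ρ K) (h : H) :
    ρ (((QuotientGroup.mk h : H ⧸ K.subgroupOf H)).out : G) m = ρ (h : G) m := by
  set x := ((QuotientGroup.mk h : H ⧸ K.subgroupOf H)).out with hx
  have h1 : (QuotientGroup.mk x : H ⧸ K.subgroupOf H) = QuotientGroup.mk h :=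
    QuotientGroup.out_eq' _
  rw [QuotientGroup.eq] at h1
  have h2 : ((x⁻¹ * h : H) : G) ∈ K := h1
  have : (h : G) = (x : G) * ((x⁻¹ * h : H) : G) := by
    push_cast
    group
  rw [this, map_mul, Module.End.mul_apply, hm _ h2]

end aux

section collapse
variable [Finite G] (ρ : Representation k G V)
set_option linter.unusedSectionVars false

lemma relTrace_apply (K H : Subgroup G) (m : V) :
    letI : Fintype (H ⧸ K.subgroupOf H) := Fintype.ofFinite _
    relTrace ρ K H m = ∑ x : H ⧸ K.subgroupOf H, ρ (x.out : G) m := by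
  rw [relTrace]
  simp [LinearMap.sum_apply]


lemma relTrace_collapse {K L H : Subgroup G} (hKL : K ≤ L) (hLH : L ≤ H)
    {m : V} (hm : m ∈ fixedSub ρ L) :
    relTrace ρ K H m = ((K.subgroupOf H).relIndex (L.subgroupOf H)) • relTrace ρ L H m := by
  classical
  letI : Fintype (H ⧸ K.subgroupOf H) := Fintype.ofFinite _
  letI : Fintype (H ⧸ L.subgroupOf H) := Fintype.ofFinite _
  letI : Fintype ((L.subgroupOf H) ⧸ (K.subgroupOf H).subgroupOf (L.subgroupOf H)) :=
    Fintype.ofFinite _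
  have hst : K.subgroupOf H ≤ L.subgroupOf H := Subgroup.comap_mono hKL
  set e := Subgroup.quotientEquivProdOfLE hst with he
  rw [relTrace_apply, relTrace_apply]
  have key : ∀ x : H ⧸ K.subgroupOf H, ρ (x.out : G) m = ρ (((e x).1.out : H) : G) m := by
    intro x
    have h1 : (e x).1 = QuotientGroup.mk x.out := by
      conv_lhs => rw [← QuotientGroup.out_eq' x]
      rfl
    rw [h1, rep_out_eq ρ L H hm x.out]
  have step1 : (∑ x : H ⧸ K.subgroupOf H, ρ (x.out : G) m)
      = ∑ z : (H ⧸ L.subgroupOf H) × ((L.subgroupOf H) ⧸ (K.subgroupOf H).subgroupOf (L.subgroupOf H)),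
          ρ ((z.1.out : H) : G) m :=
    Fintype.sum_bijective e e.bijective _ _ fun x => key x
  have hc : (K.subgroupOf H).relIndex (L.subgroupOf H)
      = Fintype.card ((L.subgroupOf H) ⧸ (K.subgroupOf H).subgroupOf (L.subgroupOf H)) := by
    show ((K.subgroupOf H).subgroupOf (L.subgroupOf H)).index = _
    rw [Subgroup.index_eq_card, Nat.card_eq_fintype_card]
  rw [step1, Fintype.sum_prod_type, hc, ← Finset.sum_nsmul]
  exact Finset.sum_congr rfl fun y _ => by simp

end collapse

section more
variable [Finite G] (ρ : Representation k G V)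
set_option linter.unusedSectionVars false

lemma relTrace_congr {K₁ K₂ : Subgroup G} (H : Subgroup G)
    (h : K₁.subgroupOf H = K₂.subgroupOf H) : relTrace ρ K₁ H = relTrace ρ K₂ H := by
  exact congrArg (fun S : Subgroup H =>
    letI : Fintype (H ⧸ S) := Fintype.ofFinite _
    ∑ x : H ⧸ S, ρ (x.out : G)) h

lemma relTrace_restrict {K H₁ H₂ : Subgroup G} (h12 : H₁ ≤ H₂)
    (hcov : ∀ g ∈ H₂, ∃ q ∈ H₁, ∃ l ∈ K, g = q * l)
    {m : V} (hm : m ∈ fixedSub ρ K) :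
    relTrace ρ K H₂ m = relTrace ρ K H₁ m := by
  classical
  letI : Fintype (H₁ ⧸ K.subgroupOf H₁) := Fintype.ofFinite _
  letI : Fintype (H₂ ⧸ K.subgroupOf H₂) := Fintype.ofFinite _
  rw [relTrace_apply, relTrace_apply]
  set f : (H₁ ⧸ K.subgroupOf H₁) → (H₂ ⧸ K.subgroupOf H₂) :=
    fun y => QuotientGroup.mk (Subgroup.inclusion h12 y.out) with hf
  have hbij : Function.Bijective f := by
    constructor
    · intro y y' hyy
      rw [hf] at hyy
      simp only [QuotientGroup.eq] at hyy
      have : ((y.out)⁻¹ * y'.out : H₁) ∈ K.subgroupOf H₁ := by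
        rw [Subgroup.mem_subgroupOf]
        simpa [Subgroup.mem_subgroupOf] using hyy
      rw [← QuotientGroup.out_eq' y, ← QuotientGroup.out_eq' y']
      exact QuotientGroup.eq.mpr this
    · intro x
      obtain ⟨q, hq, l, hl, hql⟩ := hcov (x.out : G) (x.out).2
      refine ⟨QuotientGroup.mk ⟨q, hq⟩, ?_⟩
      show QuotientGroup.mk (Subgroup.inclusion h12
        (QuotientGroup.mk (⟨q, hq⟩ : H₁) : H₁ ⧸ K.subgroupOf H₁).out) = x
      set a := (QuotientGroup.mk (⟨q, hq⟩ : H₁) : H₁ ⧸ K.subgroupOf H₁).out with ha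
      have hA : ((a : G))⁻¹ * q ∈ K := by
        have h2 := QuotientGroup.out_eq' (QuotientGroup.mk (⟨q, hq⟩ : H₁) : H₁ ⧸ K.subgroupOf H₁)
        rw [QuotientGroup.eq, Subgroup.mem_subgroupOf] at h2
        exact h2
      conv_rhs => rw [← QuotientGroup.out_eq' x]
      rw [QuotientGroup.eq, Subgroup.mem_subgroupOf]
      show ((a : G))⁻¹ * (x.out : G) ∈ K
      have h3 : ((a : G))⁻¹ * (x.out : G) = (((a : G))⁻¹ * q) * l := by rw [hql]; group
      rw [h3]
      exact K.mul_mem hA hl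
  refine (Fintype.sum_bijective f hbij _ _ ?_).symm
  intro y
  exact (rep_out_eq ρ K H₂ hm (Subgroup.inclusion h12 y.out)).symm

end more

lemma pdvd_index {p : ℕ} (hp : p.Prime) [Finite G] {H K P : Subgroup G}
    (hPH : P ≤ H) (hP : IsPGroup p P)
    (hnorm : ∀ x ∈ H, ∀ g ∈ P, x⁻¹ * g * x ∈ P) (hPK : ¬ P ≤ K) :
    p ∣ (K.subgroupOf H).index := by
  classical
  haveI : Fact p.Prime := ⟨hp⟩
  set P' := P.subgroupOf H with hP'def
  have hP' : IsPGroup p P' := hP.of_equiv (Subgroup.subgroupOfEquivOfLe hPH).symm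
  have hmod := hP'.card_modEq_card_fixedPoints (H ⧸ K.subgroupOf H)
  have hempty : IsEmpty (MulAction.fixedPoints P' (H ⧸ K.subgroupOf H)) := by
    rw [isEmpty_iff]
    rintro ⟨x, hx⟩
    rw [MulAction.mem_fixedPoints] at hx
    apply hPK
    intro g hg
    set a := x.out with ha
    have hg2 : (a : G) * g * ((a : G))⁻¹ ∈ P := by
      have h4 := hnorm ((a : G))⁻¹ (H.inv_mem a.2) g hg
      simpa [mul_assoc] using h4
    set b : H := ⟨(a : G) * g * ((a : G))⁻¹, hPH hg2⟩ with hb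
    have hbP' : b ∈ P' := Subgroup.mem_subgroupOf.mpr hg2
    have hux : (⟨b, hbP'⟩ : P') • x = x := hx ⟨b, hbP'⟩
    rw [← QuotientGroup.out_eq' x] at hux
    have hmk : (QuotientGroup.mk (b * a) : H ⧸ K.subgroupOf H) = QuotientGroup.mk a := hux
    rw [QuotientGroup.eq, Subgroup.mem_subgroupOf] at hmk
    have h5 : (((b * a)⁻¹ * a : H) : G) = g⁻¹ := by
      push_cast
      show ((a : G) * g * (a : G)⁻¹ * (a : G))⁻¹ * (a : G) = g⁻¹
      group
    rw [h5] at hmk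
    simpa using K.inv_mem hmk
  have h0 : Nat.card (MulAction.fixedPoints P' (H ⧸ K.subgroupOf H)) = 0 :=
    Nat.card_of_isEmpty
  rw [h0] at hmod
  exact Nat.modEq_zero_iff_dvd.mp hmod

open Pointwise


/-- Let `k` be a field of characteristic `p > 0`, `G` a finite group, `M` a `kG`-module
and `R ⊴ G` a normal `p`-subgroup acting trivially on `M`. Then for `Q ≤ G`,
`Σ_{K < Q} tr_K^Q(M^K) = Σ_{H < QR} tr_H^{QR}(M^H)`, both sums over all proper
subgroups, as subspaces of `M^Q = M^{QR}`. -/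
theorem scott_traceSum_eq {p : ℕ} (hp : p.Prime) [CharP k p] [Finite G]
    (ρ : Representation k G V) (R : Subgroup G) (hRn : R.Normal) (hRp : IsPGroup p R)
    (htriv : ∀ r ∈ R, ∀ v : V, ρ r v = v) (Q : Subgroup G) :
    traceSum ρ Q = traceSum ρ (Q ⊔ R) := by
  haveI := hRn
  apply le_antisymm
  · refine iSup_le ?_
    rintro ⟨K, hK⟩ v hv
    rw [Submodule.mem_map] at hv
    obtain ⟨m, hm, rfl⟩ := hv
    have hmR : m ∈ fixedSub ρ R := fun r hr => htriv r hr m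
    have hmKR : m ∈ fixedSub ρ (K ⊔ R) := mem_fixedSub_sup ρ hm hmR
    have hKL : K ≤ (K ⊔ R) ⊓ Q := le_inf le_sup_left hK.le
    have hmL : m ∈ fixedSub ρ ((K ⊔ R) ⊓ Q) := fixedSub_mono ρ inf_le_left hmKR
    have hcoll := relTrace_collapse ρ hKL inf_le_right hmL
    have hcongr : relTrace ρ ((K ⊔ R) ⊓ Q) Q = relTrace ρ (K ⊔ R) Q := by
      refine relTrace_congr ρ Q ?_
      ext x
      simp [Subgroup.mem_subgroupOf, x.2]
    have hrestr : relTrace ρ (K ⊔ R) Q m = relTrace ρ (K ⊔ R) (Q ⊔ R) m := by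
      refine (relTrace_restrict ρ le_sup_left ?_ hmKR).symm
      intro g hg
      have hg' : g ∈ (Q : Set G) * (R : Set G) := by
        rw [← Subgroup.mul_normal Q R]; exact hg
      obtain ⟨q, hq, r, hr, rfl⟩ := hg'
      exact ⟨q, hq, r, Subgroup.mem_sup_right hr, rfl⟩
    rw [hcoll, hcongr, hrestr]
    by_cases htop : K ⊔ R = Q ⊔ R
    · have hLQtop : (K ⊔ R) ⊓ Q = Q := by rw [htop]; exact inf_eq_right.mpr le_sup_left
      have hdvd : p ∣ (K.subgroupOf Q).relIndex (((K ⊔ R) ⊓ Q).subgroupOf Q) := by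
        rw [hLQtop, Subgroup.subgroupOf_self, Subgroup.relIndex_top_right]
        refine pdvd_index hp inf_le_left (hRp.to_le inf_le_right) ?_ ?_
        · intro x hx g hg
          refine Subgroup.mem_inf.mpr ⟨?_, ?_⟩
          · exact Q.mul_mem (Q.mul_mem (Q.inv_mem hx) (Subgroup.mem_inf.mp hg).1) hx
          · simpa using hRn.conj_mem g (Subgroup.mem_inf.mp hg).2 x⁻¹
        · intro hQRK
          have h3 : Q ≤ K := by
            intro q hq
            have hq2 : q ∈ K ⊔ R := by rw [htop]; exact Subgroup.mem_sup_left hq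
            have hq3 : q ∈ (K : Set G) * (R : Set G) := by
              rw [← Subgroup.mul_normal K R]; exact hq2
            obtain ⟨x, hx, r, hr, rfl⟩ := hq3
            have hrQ : r ∈ Q := by
              have h4 : r = x⁻¹ * (x * r) := by group
              rw [h4]
              exact Q.mul_mem (Q.inv_mem (hK.le hx)) hq
            exact K.mul_mem hx (hQRK (Subgroup.mem_inf.mpr ⟨hrQ, hr⟩))
          exact hK.not_ge h3
      have hzero : (((K.subgroupOf Q).relIndex (((K ⊔ R) ⊓ Q).subgroupOf Q) : k)) = 0 :=
        (CharP.cast_eq_zero_iff k p _).mpr hdvd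
      rw [← Nat.cast_smul_eq_nsmul k, hzero, zero_smul]
      exact Submodule.zero_mem _
    · have hlt : K ⊔ R < Q ⊔ R := lt_of_le_of_ne (sup_le_sup_right hK.le R) htop
      rw [← Nat.cast_smul_eq_nsmul k]
      refine Submodule.smul_mem _ _ ?_
      exact Submodule.mem_iSup_of_mem (⟨K ⊔ R, hlt⟩ : {T : Subgroup G // T < Q ⊔ R})
        ⟨m, hmKR, rfl⟩
  · refine iSup_le ?_
    rintro ⟨T, hT⟩ v hv
    rw [Submodule.mem_map] at hv
    obtain ⟨m, hm, rfl⟩ := hv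
    have hmR : m ∈ fixedSub ρ R := fun r hr => htriv r hr m
    have hmL : m ∈ fixedSub ρ (T ⊔ R) := mem_fixedSub_sup ρ hm hmR
    have hL2 : T ⊔ R ≤ Q ⊔ R := sup_le hT.le le_sup_right
    have hcoll := relTrace_collapse ρ (le_sup_left : T ≤ T ⊔ R) hL2 hmL
    have hrestr : relTrace ρ (T ⊔ R) (Q ⊔ R) m = relTrace ρ (T ⊔ R) Q m := by
      refine relTrace_restrict ρ le_sup_left ?_ hmL
      intro g hg
      have hg' : g ∈ (Q : Set G) * (R : Set G) := by
        rw [← Subgroup.mul_normal Q R]; exact hg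
      obtain ⟨q, hq, r, hr, rfl⟩ := hg'
      exact ⟨q, hq, r, Subgroup.mem_sup_right hr, rfl⟩
    have hcongr : relTrace ρ (T ⊔ R) Q = relTrace ρ ((T ⊔ R) ⊓ Q) Q := by
      refine relTrace_congr ρ Q ?_
      ext x
      simp [Subgroup.mem_subgroupOf, x.2]
    rw [hcoll, hrestr, hcongr]
    by_cases hKQ : (T ⊔ R) ⊓ Q = Q
    · have hLtop : T ⊔ R = Q ⊔ R := by
        refine le_antisymm hL2 (sup_le ?_ le_sup_right)
        rw [← hKQ]; exact inf_le_left
      have hdvd : p ∣ (T.subgroupOf (Q ⊔ R)).relIndex ((T ⊔ R).subgroupOf (Q ⊔ R)) := by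
        rw [hLtop, Subgroup.subgroupOf_self, Subgroup.relIndex_top_right]
        refine pdvd_index hp le_sup_right hRp ?_ ?_
        · intro x hx g hg
          simpa using hRn.conj_mem g hg x⁻¹
        · intro hRT
          have : T = Q ⊔ R := by rw [← hLtop, sup_eq_left.mpr hRT]
          exact hT.ne this
      have hzero : (((T.subgroupOf (Q ⊔ R)).relIndex ((T ⊔ R).subgroupOf (Q ⊔ R)) : k)) = 0 :=
        (CharP.cast_eq_zero_iff k p _).mpr hdvd
      rw [← Nat.cast_smul_eq_nsmul k, hzero, zero_smul]
      exact Submodule.zero_mem _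
    · have hlt : (T ⊔ R) ⊓ Q < Q := lt_of_le_of_ne inf_le_right hKQ
      rw [← Nat.cast_smul_eq_nsmul k]
      refine Submodule.smul_mem _ _ ?_
      exact Submodule.mem_iSup_of_mem (⟨(T ⊔ R) ⊓ Q, hlt⟩ : {T' : Subgroup G // T' < Q})
        ⟨m, fixedSub_mono ρ inf_le_left hmL, rfl⟩
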